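/- Let R be a ring and f an idempotent of R. An element a of the corner ring fRf is a strongly weak nil clean element of R if and only if a is a strongly weak nil clean element of fRf. -/

import Mathlib

open Finset in
lemma aux_comm {S : Type*} [CommRing S] (b : S) (h : IsNilpotent (b - b * b)) :
    ∃ (k : ℕ) (v : S), IsIdempotentElem (b ^ (k+1) * v) ∧
      IsNilpotent (b - b ^ (k+1) * v) := by
  obtain ⟨k, hk⟩ := h
  have hm : (b - b * b) ^ (k + 1) = 0 := by rw [pow_succ, hk, zero_mul]
  set c : S := 1 - b with hc
  have hb2 : b - b * b ∈ nilradical S := mem_nilradical.mpr ⟨k + 1, hm⟩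
  have h1 : b ^ (k+1) - b ∈ nilradical S := by
    have hfac : b ^ (k+1) - b = -((b - b * b) * ∑ i ∈ range k, b ^ i) := by
      linear_combination (-b) * geom_sum_mul b k
    rw [hfac]
    exact neg_mem (Ideal.mul_mem_right _ _ hb2)
  have h2 : c ^ (k+1) - c ∈ nilradical S := by
    have hfac : c ^ (k+1) - c = -((b - b * b) * ∑ i ∈ range k, c ^ i) := by
      have h2' := geom_sum_mul c k
      rw [hc] at h2' ⊢
      linear_combination (-(1 - b)) * h2'
    rw [hfac]
    exact neg_mem (Ideal.mul_mem_right _ _ hb2)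
  set s : S := b ^ (k+1) + c ^ (k+1) with hs
  have hsnil : s - 1 ∈ nilradical S := by
    have : s - 1 = (b ^ (k+1) - b) + (c ^ (k+1) - c) := by rw [hs, hc]; ring
    rw [this]; exact add_mem h1 h2
  have hu : IsUnit s := by
    have := (mem_nilradical.mp hsnil).isUnit_one_add
    simpa using this
  obtain ⟨u, hu⟩ := hu
  refine ⟨k, ((u⁻¹ : Sˣ) : S), ?_, ?_⟩
  · set v : S := ((u⁻¹ : Sˣ) : S) with hv
    have hsv : s * v = 1 := by rw [hv, ← hu]; exact u.mul_inv
    have hm2 : b ^ (k+1) * c ^ (k+1) = 0 := by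
      rw [← mul_pow]
      have : b * c = b - b * b := by rw [hc]; ring
      rw [this, hm]
    have hEE : b ^ (k+1) * v - (b ^ (k+1) * v) * (b ^ (k+1) * v)
        = (b ^ (k+1) * c ^ (k+1)) * (v * v) := by
      linear_combination (-(b ^ (k+1) * v)) * hsv
    rw [hm2, zero_mul] at hEE
    exact (sub_eq_zero.mp hEE).symm
  · set v : S := ((u⁻¹ : Sˣ) : S) with hv
    have hsv : s * v = 1 := by rw [hv, ← hu]; exact u.mul_inv
    have hv1 : v - 1 ∈ nilradical S := by
      have : v - 1 = -(v * (s - 1)) := by linear_combination hsv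
      rw [this]; exact neg_mem (Ideal.mul_mem_left _ _ hsnil)
    have hbE : b - b ^ (k+1) * v ∈ nilradical S := by
      have : b - b ^ (k+1) * v = -(b ^ (k+1) - b) - b ^ (k+1) * (v - 1) := by ring
      rw [this]
      exact sub_mem (neg_mem h1) (Ideal.mul_mem_left _ _ hv1)
    exact mem_nilradical.mp hbE

lemma key_corner {R : Type*} [Ring R] {f a : R} (hf : IsIdempotentElem f)
    (ha : f * a * f = a) (h : IsNilpotent (a - a * a)) :
    ∃ e n : R, f * e * f = e ∧ f * n * f = n ∧ IsIdempotentElem e ∧ IsNilpotent n ∧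
      e * n = n * e ∧ a = e + n := by
  have hfa : f * a = a := by
    nth_rewrite 1 [← ha]; rw [← mul_assoc, ← mul_assoc, hf]; exact ha
  have haf : a * f = a := by
    nth_rewrite 1 [← ha]; rw [mul_assoc, hf]; exact ha
  set S := Subring.closure ({a} : Set R) with hS
  letI : CommRing S := Subring.closureCommRingOfComm (by rintro x rfl y rfl; rfl)
  set b : S := ⟨a, Subring.subset_closure rfl⟩ with hb
  have hbnil : IsNilpotent (b - b * b) := by
    obtain ⟨j, hj⟩ := h
    exact ⟨j, Subtype.ext (by push_cast [hb]; exact hj)⟩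
  obtain ⟨k, v, hE, hN⟩ := aux_comm b hbnil
  refine ⟨((b ^ (k+1) * v : S) : R), ((b - b ^ (k+1) * v : S) : R), ?_, ?_, ?_, ?_, ?_, ?_⟩
  · have hva : a * ((v : S) : R) = ((v : S) : R) * a := by
      have := congrArg (Subtype.val) (mul_comm b v)
      push_cast [hb] at this
      exact this
    have h1 : ((b ^ (k+1) * v : S) : R) = a * ((b ^ k * v : S) : R) := by
      push_cast [hb]; rw [pow_succ', mul_assoc]
    have h2 : ((b ^ (k+1) * v : S) : R) = ((b ^ k * v : S) : R) * a := by
      push_cast [hb]; rw [pow_succ, mul_assoc, hva, ← mul_assoc]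
    rw [h1, ← mul_assoc, hfa, ← h1, h2, mul_assoc, haf, ← h2]
  · have hva : a * ((v : S) : R) = ((v : S) : R) * a := by
      have := congrArg (Subtype.val) (mul_comm b v)
      push_cast [hb] at this
      exact this
    have h3 : ((b - b ^ (k+1) * v : S) : R) = a - ((b ^ (k+1) * v : S) : R) := by
      push_cast [hb]; rfl
    rw [h3, mul_sub, sub_mul, ha]
    have h1 : ((b ^ (k+1) * v : S) : R) = a * ((b ^ k * v : S) : R) := by
      push_cast [hb]; rw [pow_succ', mul_assoc]
    have h2 : ((b ^ (k+1) * v : S) : R) = ((b ^ k * v : S) : R) * a := by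
      push_cast [hb]; rw [pow_succ, mul_assoc, hva, ← mul_assoc]
    rw [h1, ← mul_assoc, hfa, ← h1, h2, mul_assoc, haf, ← h2]
  · have := congrArg (Subtype.val) hE
    push_cast at this
    exact this
  · obtain ⟨j, hj⟩ := hN
    refine ⟨j, ?_⟩
    have := congrArg (Subtype.val) hj
    push_cast at this
    exact this
  · have := congrArg (Subtype.val)
      (mul_comm (b ^ (k+1) * v) (b - b ^ (k+1) * v))
    push_cast at this
    exact this
  · push_cast [hb]
    abel

/-- For an idempotent `f` of `R` and `a ∈ fRf`, `a` is a strongly weak nil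
clean element of `R` iff it is a strongly weak nil clean element of the corner ring `fRf`. -/
theorem stronglyWeakNilClean_corner_iff {R : Type*} [Ring R] (f : R)
    (hf : IsIdempotentElem f) (a : R) (ha : f * a * f = a) :
    (∃ e n : R, IsIdempotentElem e ∧ IsNilpotent n ∧ e * n = n * e ∧
      (a = e + n ∨ a = -e + n)) ↔
    (∃ e n : R, f * e * f = e ∧ f * n * f = n ∧ IsIdempotentElem e ∧ IsNilpotent n ∧
      e * n = n * e ∧ (a = e + n ∨ a = -e + n)) := by
  constructor
  · rintro ⟨e, n, he, hn, hcomm, hae | hae⟩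
    · have hce : Commute e n := hcomm
      have hne : Commute n e := hce.symm
      have hee : e * e = e := he
      have hfac : a - a * a = n * (1 - e - e - n) := by
        rw [hae]
        linear_combination (norm := noncomm_ring) -hee - hcomm
      have hnil : IsNilpotent (a - a * a) := by
        rw [hfac]
        exact Commute.isNilpotent_mul_right
          ((((Commute.one_right n).sub_right hne).sub_right hne).sub_right
            (Commute.refl n)) hn
      obtain ⟨e', n', h1, h2, h3, h4, h5, h6⟩ := key_corner hf ha hnil
      exact ⟨e', n', h1, h2, h3, h4, h5, Or.inl h6⟩
    · have hce : Commute e n := hcomm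
      have hne : Commute n e := hce.symm
      have hee : e * e = e := he
      have ha' : f * (-a) * f = -a := by rw [mul_neg, neg_mul, ha]
      have hfac : (-a) - (-a) * (-a) = n * (e + e - 1 - n) := by
        rw [hae]
        linear_combination (norm := noncomm_ring) -hee + hcomm
      have hnil : IsNilpotent ((-a) - (-a) * (-a)) := by
        rw [hfac]
        exact Commute.isNilpotent_mul_right
          ((((hne.add_right hne).sub_right (Commute.one_right n)).sub_right
            (Commute.refl n))) hn
      obtain ⟨e', n', h1, h2, h3, h4, h5, h6⟩ := key_corner hf ha' hnil
      refine ⟨e', -n', h1, by rw [mul_neg, neg_mul, h2], h3, h4.neg, ?_, Or.inr ?_⟩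
      · rw [mul_neg, neg_mul, h5]
      · have : a = -(e' + n') := by rw [← h6, neg_neg]
        rw [this, neg_add]
  · rintro ⟨e, n, _, _, he, hn, hcomm, h⟩
    exact ⟨e, n, he, hn, hcomm, h⟩
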